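/- The submonoid of (ℕ², +) generated by the set {(1,0)} ∪ {(1,k) : k ≥ 1} is not finitely generated. -/

import Mathlib

theorem initial_exponent_monoid_not_fg :
    ¬ (AddSubmonoid.closure
        ({(1, 0)} ∪ {p : ℕ × ℕ | ∃ k : ℕ, 1 ≤ k ∧ p = (1, k)})).FG := by
  set G : Set (ℕ × ℕ) := {(1, 0)} ∪ {p : ℕ × ℕ | ∃ k : ℕ, 1 ≤ k ∧ p = (1, k)} with hG
  rintro ⟨T, hT⟩
  -- every element of the closure is 0 or has first coordinate ≥ 1
  have hfst : ∀ p ∈ AddSubmonoid.closure G, p = 0 ∨ 1 ≤ p.1 := by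
    intro p hp
    induction hp using AddSubmonoid.closure_induction with
    | mem x hx =>
      right
      rcases hx with hx | ⟨k, hk, rfl⟩
      · simp only [Set.mem_singleton_iff] at hx; subst hx; simp
      · simp
    | zero => left; rfl
    | add x y hx hy ihx ihy =>
      rcases ihx with rfl | hx1
      · simpa using ihy
      · right; simpa [Prod.fst_add] using Nat.le_add_right_of_le hx1
  have hTsub : (↑T : Set (ℕ × ℕ)) ⊆ AddSubmonoid.closure G := by
    rw [← hT]; exact AddSubmonoid.subset_closure
  -- every element of closure T with fst = 1 lies in T
  have hkey : ∀ p ∈ AddSubmonoid.closure (↑T : Set (ℕ × ℕ)), p.1 = 1 → p ∈ (↑T : Set (ℕ × ℕ)) := by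
    intro p hp
    induction hp using AddSubmonoid.closure_induction with
    | mem x hx => intro _; exact hx
    | zero => intro h; simp at h
    | add x y hx hy ihx ihy =>
      intro h1
      have hx' := hfst x (by rw [← hT]; exact hx)
      have hy' := hfst y (by rw [← hT]; exact hy)
      have hxy : x.1 + y.1 = 1 := h1
      rcases hx' with rfl | hx1
      · have : y.1 = 1 := by simpa using hxy
        simpa using ihy this
      · rcases hy' with rfl | hy1
        · have : x.1 = 1 := by simpa using hxy
          simpa using ihx this
        · omega
  -- all (1, k) with k ≥ 1 are in T
  have hmem : ∀ k : ℕ, 1 ≤ k → ((1, k) : ℕ × ℕ) ∈ (↑T : Set (ℕ × ℕ)) := by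
    intro k hk
    apply hkey _ _ rfl
    rw [hT]
    exact AddSubmonoid.subset_closure (Or.inr ⟨k, hk, rfl⟩)
  have : Set.Infinite (↑T : Set (ℕ × ℕ)) := by
    apply Set.infinite_of_injective_forall_mem (f := fun k : ℕ => ((1, k + 1) : ℕ × ℕ))
    · intro a b hab
      simpa using hab
    · intro k
      exact hmem (k + 1) (by omega)
  exact this T.finite_toSet
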